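/- Let T be a bounded linear operator on a complex Hilbert space H with Tⁿ = 0 for some integer n ≥ 2. Then w(T)ⁿ ≤ ∑_{k=1}^{n-1} (1/2^k) ‖Tᵏ‖ ‖T‖^{n-k} ≤ (1 − 1/2^{n-1}) ‖T‖ⁿ. -/

import Mathlib

open scoped InnerProductSpace

variable {H : Type*} [NormedAddCommGroup H] [InnerProductSpace ℂ H] [CompleteSpace H]

-- Buzano's inequality
lemma buzano (a b x : H) (hx : ‖x‖ = 1) :
    ‖⟪a, x⟫_ℂ‖ * ‖⟪x, b⟫_ℂ‖ ≤ (‖a‖ * ‖b‖ + ‖⟪a, b⟫_ℂ‖) / 2 := by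
  set c := ⟪x, a⟫_ℂ with hc
  set p : H := ((2 : ℂ) * c) • x - a with hp
  have hxx : ⟪x, x⟫_ℂ = 1 := by
    rw [inner_self_eq_norm_sq_to_K, hx]; norm_num
  have hnp : ‖p‖ = ‖a‖ := by
    have h1 : ‖p‖ ^ 2 = ‖a‖ ^ 2 := by
      have e1 : p = (c • x) - (a - c • x) := by rw [hp]; module
      have e2 : a = (c • x) + (a - c • x) := by module
      have horth : ⟪c • x, a - c • x⟫_ℂ = 0 := by
        rw [inner_smul_left, inner_sub_right, inner_smul_right, hxx, ← hc]
        ring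
      have h2 := @norm_sub_sq ℂ _ _ _ _ (c • x) (a - c • x)
      have h3 := @norm_add_sq ℂ _ _ _ _ (c • x) (a - c • x)
      rw [horth] at h2 h3
      simp only [map_zero, mul_zero, zero_mul] at h2 h3
      rw [e1]
      nth_rewrite 2 [e2]
      rw [h2, h3]; ring
    nlinarith [norm_nonneg p, norm_nonneg a]
  have hid : (2 : ℂ) * ⟪a, x⟫_ℂ * ⟪x, b⟫_ℂ = ⟪p, b⟫_ℂ + ⟪a, b⟫_ℂ := by
    rw [hp, inner_sub_left, inner_smul_left]
    have : (starRingEnd ℂ) ((2:ℂ) * c) = 2 * ⟪a, x⟫_ℂ := by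
      rw [map_mul, map_ofNat, hc, inner_conj_symm]
    rw [this]; ring
  have key : 2 * (‖⟪a, x⟫_ℂ‖ * ‖⟪x, b⟫_ℂ‖) ≤ ‖a‖ * ‖b‖ + ‖⟪a, b⟫_ℂ‖ := by
    calc 2 * (‖⟪a, x⟫_ℂ‖ * ‖⟪x, b⟫_ℂ‖) = ‖(2 : ℂ) * ⟪a, x⟫_ℂ * ⟪x, b⟫_ℂ‖ := by
          simp [norm_mul]; ring
      _ = ‖⟪p, b⟫_ℂ + ⟪a, b⟫_ℂ‖ := by rw [hid]
      _ ≤ ‖⟪p, b⟫_ℂ‖ + ‖⟪a, b⟫_ℂ‖ := norm_add_le _ _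
      _ ≤ ‖p‖ * ‖b‖ + ‖⟪a, b⟫_ℂ‖ := by gcongr; exact norm_inner_le_norm p b
      _ = ‖a‖ * ‖b‖ + ‖⟪a, b⟫_ℂ‖ := by rw [hnp]
  linarith

lemma recur (T : H →L[ℂ] H) (x : H) (hx : ‖x‖ = 1) (k : ℕ) :
    ‖⟪(T ^ k) x, x⟫_ℂ‖ * ‖⟪T x, x⟫_ℂ‖ ≤
      (‖T ^ k‖ * ‖T‖ + ‖⟪(T ^ (k + 1)) x, x⟫_ℂ‖) / 2 := by
  have hb := buzano ((T ^ k) x) ((ContinuousLinearMap.adjoint T) x) x hx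
  rw [ContinuousLinearMap.adjoint_inner_right] at hb
  have h2 : ⟪(T ^ k) x, (ContinuousLinearMap.adjoint T) x⟫_ℂ = ⟪(T ^ (k+1)) x, x⟫_ℂ := by
    rw [ContinuousLinearMap.adjoint_inner_right, pow_succ', ContinuousLinearMap.mul_apply]
  rw [h2] at hb
  refine hb.trans ?_
  gcongr
  · calc ‖(T ^ k) x‖ ≤ ‖T ^ k‖ * ‖x‖ := (T ^ k).le_opNorm x
      _ = ‖T ^ k‖ := by rw [hx, mul_one]
  · calc ‖(ContinuousLinearMap.adjoint T) x‖ ≤ ‖ContinuousLinearMap.adjoint T‖ * ‖x‖ :=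
        (ContinuousLinearMap.adjoint T).le_opNorm x
      _ = ‖T‖ := by rw [hx, mul_one, ContinuousLinearMap.adjoint.norm_map]

lemma main_ind (T : H →L[ℂ] H) (x : H) (hx : ‖x‖ = 1) (m : ℕ) (hm : 1 ≤ m) :
    ‖⟪T x, x⟫_ℂ‖ ^ m ≤ ∑ k ∈ Finset.Icc 1 (m - 1), (1 / 2 ^ k) * ‖T ^ k‖ * ‖T‖ ^ (m - k)
      + (1 / 2 ^ (m - 1)) * ‖⟪(T ^ m) x, x⟫_ℂ‖ := by
  induction m, hm using Nat.le_induction with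
  | base => simp [pow_one]
  | succ m hm ih =>
    obtain ⟨j, rfl⟩ : ∃ j, m = j + 1 := ⟨m - 1, by omega⟩
    have hc1 : ‖⟪T x, x⟫_ℂ‖ ≤ ‖T‖ := by
      calc ‖⟪T x, x⟫_ℂ‖ ≤ ‖T x‖ * ‖x‖ := norm_inner_le_norm _ _
        _ ≤ (‖T‖ * ‖x‖) * ‖x‖ := by gcongr; exact T.le_opNorm x
        _ = ‖T‖ := by rw [hx]; ring
    have hcnn : (0:ℝ) ≤ ‖⟪T x, x⟫_ℂ‖ := norm_nonneg _
    simp only [Nat.add_sub_cancel] at ih ⊢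
    have hrec := recur T x hx (j + 1)
    have snn : (0:ℝ) ≤ ∑ k ∈ Finset.Icc 1 j, (1 / 2 ^ k) * ‖T ^ k‖ * ‖T‖ ^ (j + 1 - k) :=
      Finset.sum_nonneg fun k _ => by positivity
    calc ‖⟪T x, x⟫_ℂ‖ ^ (j + 1 + 1) = ‖⟪T x, x⟫_ℂ‖ ^ (j + 1) * ‖⟪T x, x⟫_ℂ‖ := pow_succ _ _
      _ ≤ (∑ k ∈ Finset.Icc 1 j, (1 / 2 ^ k) * ‖T ^ k‖ * ‖T‖ ^ (j + 1 - k)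
            + (1 / 2 ^ j) * ‖⟪(T ^ (j + 1)) x, x⟫_ℂ‖) * ‖⟪T x, x⟫_ℂ‖ :=
          mul_le_mul_of_nonneg_right ih hcnn
      _ = (∑ k ∈ Finset.Icc 1 j, (1 / 2 ^ k) * ‖T ^ k‖ * ‖T‖ ^ (j + 1 - k)) * ‖⟪T x, x⟫_ℂ‖
            + (1 / 2 ^ j) * (‖⟪(T ^ (j + 1)) x, x⟫_ℂ‖ * ‖⟪T x, x⟫_ℂ‖) := by ring
      _ ≤ (∑ k ∈ Finset.Icc 1 j, (1 / 2 ^ k) * ‖T ^ k‖ * ‖T‖ ^ (j + 1 - k)) * ‖T‖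
            + (1 / 2 ^ j) * ((‖T ^ (j + 1)‖ * ‖T‖ + ‖⟪(T ^ (j + 1 + 1)) x, x⟫_ℂ‖) / 2) :=
          add_le_add (mul_le_mul_of_nonneg_left hc1 snn)
            (mul_le_mul_of_nonneg_left hrec (by positivity))
      _ = (∑ k ∈ Finset.Icc 1 j, (1 / 2 ^ k) * ‖T ^ k‖ * ‖T‖ ^ (j + 1 + 1 - k))
            + ((1 / 2 ^ (j + 1)) * ‖T ^ (j + 1)‖ * ‖T‖ ^ (j + 1 + 1 - (j + 1))
              + (1 / 2 ^ (j + 1)) * ‖⟪(T ^ (j + 1 + 1)) x, x⟫_ℂ‖) := by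
          rw [Finset.sum_mul]
          congr 1
          · refine Finset.sum_congr rfl fun k hk => ?_
            have hk' : k ≤ j := (Finset.mem_Icc.mp hk).2
            have he : j + 1 + 1 - k = (j + 1 - k) + 1 := by omega
            rw [he, pow_succ]; ring
          · have he : j + 1 + 1 - (j + 1) = 1 := by omega
            rw [he, pow_one, pow_succ]; ring
      _ = (∑ k ∈ Finset.Icc 1 (j + 1), (1 / 2 ^ k) * ‖T ^ k‖ * ‖T‖ ^ (j + 1 + 1 - k))
            + (1 / 2 ^ (j + 1)) * ‖⟪(T ^ (j + 1 + 1)) x, x⟫_ℂ‖ := by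
          rw [Finset.sum_Icc_succ_top (by omega : 1 ≤ j + 1)]
          ring

lemma geo (m : ℕ) : ∑ k ∈ Finset.Icc 1 m, ((1:ℝ)/2) ^ k = 1 - (1/2) ^ m := by
  induction m with
  | zero => simp
  | succ m ih =>
    rw [Finset.sum_Icc_succ_top (by omega : 1 ≤ m + 1), ih, pow_succ]
    ring


/-- The numerical radius of a bounded linear operator. -/
noncomputable def numRadius (T : H →L[ℂ] H) : ℝ :=
  sSup {r : ℝ | ∃ x : H, ‖x‖ = 1 ∧ r = ‖⟪T x, x⟫_ℂ‖}

theorem nilpotent_bound (T : H →L[ℂ] H) (n : ℕ) (hn : 2 ≤ n) (h : T ^ n = 0) :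
    (numRadius T) ^ n ≤ ∑ k ∈ Finset.Icc 1 (n - 1), (1 / 2 ^ k) * ‖T ^ k‖ * ‖T‖ ^ (n - k) ∧
    ∑ k ∈ Finset.Icc 1 (n - 1), (1 / 2 ^ k) * ‖T ^ k‖ * ‖T‖ ^ (n - k) ≤
      (1 - 1 / 2 ^ (n - 1)) * ‖T‖ ^ n := by
  set S := ∑ k ∈ Finset.Icc 1 (n - 1), (1 / 2 ^ k) * ‖T ^ k‖ * ‖T‖ ^ (n - k) with hSdef
  have hS : 0 ≤ S := Finset.sum_nonneg fun k _ => by positivity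
  have hn0 : (n : ℝ) ≠ 0 := by positivity
  constructor
  · -- pointwise bound
    have hpt : ∀ x : H, ‖x‖ = 1 → ‖⟪T x, x⟫_ℂ‖ ^ n ≤ S := by
      intro x hx
      have hmi := main_ind T x hx n (by omega)
      have hz : (⟪(T ^ n) x, x⟫_ℂ) = 0 := by rw [h]; simp
      rw [hz, norm_zero, mul_zero, add_zero] at hmi
      exact hmi
    rcases subsingleton_or_nontrivial H with hH | hH
    · have hA : {r : ℝ | ∃ x : H, ‖x‖ = 1 ∧ r = ‖⟪T x, x⟫_ℂ‖} = ∅ := by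
        ext r
        simp only [Set.mem_setOf_eq, Set.mem_empty_iff_false, iff_false, not_exists]
        rintro x ⟨hx, -⟩
        rw [Subsingleton.elim x 0] at hx
        simp at hx
      rw [numRadius, hA, Real.sSup_empty, zero_pow (by omega : n ≠ 0)]
      exact hS
    · obtain ⟨v, hv⟩ := exists_ne (0 : H)
      have hu : ‖((‖v‖⁻¹ : ℂ) • v)‖ = 1 := norm_smul_inv_norm hv
      have hne : {r : ℝ | ∃ x : H, ‖x‖ = 1 ∧ r = ‖⟪T x, x⟫_ℂ‖}.Nonempty :=
        ⟨_, _, hu, rfl⟩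
      have hbd : ∀ r ∈ {r : ℝ | ∃ x : H, ‖x‖ = 1 ∧ r = ‖⟪T x, x⟫_ℂ‖},
          r ≤ S ^ ((n : ℝ)⁻¹) := by
        rintro r ⟨x, hx, rfl⟩
        have h1 : ‖⟪T x, x⟫_ℂ‖ = ((‖⟪T x, x⟫_ℂ‖ ^ n : ℝ)) ^ ((n:ℝ)⁻¹) := by
          rw [← Real.rpow_natCast ‖⟪T x, x⟫_ℂ‖ n, ← Real.rpow_mul (norm_nonneg _),
            mul_inv_cancel₀ hn0, Real.rpow_one]
        rw [h1]
        exact Real.rpow_le_rpow (by positivity) (hpt x hx) (by positivity)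
      have hnr_le : numRadius T ≤ S ^ ((n : ℝ)⁻¹) := csSup_le hne hbd
      have hnr_nn : 0 ≤ numRadius T := by
        obtain ⟨r, hrA⟩ := hne
        obtain ⟨x, hx, hr⟩ := hrA
        have h0r : 0 ≤ r := by rw [hr]; exact norm_nonneg _
        have hle : r ≤ numRadius T := le_csSup ⟨S ^ ((n:ℝ)⁻¹), hbd⟩ ⟨x, hx, hr⟩
        linarith
      calc (numRadius T) ^ n ≤ (S ^ ((n : ℝ)⁻¹)) ^ n := pow_le_pow_left₀ hnr_nn hnr_le n
        _ = S := by
          rw [← Real.rpow_natCast (S ^ ((n:ℝ)⁻¹)) n, ← Real.rpow_mul hS,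
            inv_mul_cancel₀ hn0, Real.rpow_one]
  · have step1 : S ≤ ∑ k ∈ Finset.Icc 1 (n - 1), (1 / 2 ^ k) * ‖T‖ ^ k * ‖T‖ ^ (n - k) := by
      refine Finset.sum_le_sum fun k hk => ?_
      have hk1 : 1 ≤ k := (Finset.mem_Icc.mp hk).1
      have : ‖T ^ k‖ ≤ ‖T‖ ^ k := norm_pow_le' T (by omega)
      gcongr
    refine step1.trans ?_
    have step2 : ∑ k ∈ Finset.Icc 1 (n - 1), (1 / 2 ^ k) * ‖T‖ ^ k * ‖T‖ ^ (n - k)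
        = (∑ k ∈ Finset.Icc 1 (n - 1), ((1:ℝ)/2) ^ k) * ‖T‖ ^ n := by
      rw [Finset.sum_mul]
      refine Finset.sum_congr rfl fun k hk => ?_
      have hk2 : k ≤ n - 1 := (Finset.mem_Icc.mp hk).2
      have hkn : k + (n - k) = n := by omega
      have hpow : ‖T‖ ^ k * ‖T‖ ^ (n - k) = ‖T‖ ^ n := by rw [← pow_add, hkn]
      rw [mul_assoc, hpow, ← one_div_pow]
    rw [step2, geo, one_div_pow]
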